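/- Let P_0, P_1 be two probability measures on a measurable space, let C be a random set (confidence interval) with endpoints measurable, let 0 and δ be two real values, and set A_0 = {0 ∈ C}, A_1 = {δ ∈ C}, W = sup C − inf C. If P_0(A_0) ≥ 1 − α, P_1(A_1) ≥ 1 − α, and the total variation distance TV(P_0, P_1) ≤ τ, then P_0(W² ≥ δ²) ≥ 1 − 2α − τ. -/

import Mathlib

open MeasureTheory

theorem stmt7 {Ω : Type*} [MeasurableSpace Ω] (P0 P1 : Measure Ω)
    [IsProbabilityMeasure P0] [IsProbabilityMeasure P1]
    (L U : Ω → ℝ) (hL : Measurable L) (hU : Measurable U) (δ α τ : ℝ)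
    (h0 : 1 - α ≤ (P0 {ω | L ω ≤ 0 ∧ 0 ≤ U ω}).toReal)
    (h1 : 1 - α ≤ (P1 {ω | L ω ≤ δ ∧ δ ≤ U ω}).toReal)
    (hTV : ∀ s : Set Ω, MeasurableSet s → |(P0 s).toReal - (P1 s).toReal| ≤ τ) :
    1 - 2 * α - τ ≤ (P0 {ω | δ ^ 2 ≤ (U ω - L ω) ^ 2}).toReal := by
  set A0 : Set Ω := {ω | L ω ≤ 0 ∧ 0 ≤ U ω}
  set A1 : Set Ω := {ω | L ω ≤ δ ∧ δ ≤ U ω}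
  have mA0 : MeasurableSet A0 := (hL measurableSet_Iic).inter (hU measurableSet_Ici)
  have mA1 : MeasurableSet A1 :=
    (hL measurableSet_Iic).inter (hU measurableSet_Ici)
  have hsub : A0 ∩ A1 ⊆ {ω | δ ^ 2 ≤ (U ω - L ω) ^ 2} := by
    rintro ω ⟨⟨h1', h2'⟩, ⟨h3', h4'⟩⟩
    have habs : |δ| ≤ U ω - L ω := by
      rcases abs_cases δ with ⟨he, _⟩ | ⟨he, _⟩ <;> rw [he] <;> linarith
    have := sq_le_sq' (by linarith [abs_nonneg δ, neg_abs_le δ]) habs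
    simpa [sq_abs] using this.trans_eq' (sq_abs δ)
  -- toReal arithmetic
  have fin : ∀ (P : Measure Ω) [IsProbabilityMeasure P] (s : Set Ω), P s ≠ ⊤ :=
    fun P _ s => (measure_lt_top P s).ne
  have hTV1 := hTV A1 mA1
  have hP0A1 : 1 - α - τ ≤ (P0 A1).toReal := by
    have := abs_le.mp hTV1
    linarith [this.1]
  have hinter : (P0 A0).toReal + (P0 A1).toReal - 1 ≤ (P0 (A0 ∩ A1)).toReal := by
    have hu : P0 (A0 ∪ A1) + P0 (A0 ∩ A1) = P0 A0 + P0 A1 :=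
      measure_union_add_inter A0 mA1
    have hr : (P0 (A0 ∪ A1)).toReal + (P0 (A0 ∩ A1)).toReal
        = (P0 A0).toReal + (P0 A1).toReal := by
      rw [← ENNReal.toReal_add (fin _ _) (fin _ _), ← ENNReal.toReal_add (fin _ _) (fin _ _), hu]
    have hle : (P0 (A0 ∪ A1)).toReal ≤ 1 := by
      have := prob_le_one (μ := P0) (s := A0 ∪ A1)
      simpa using ENNReal.toReal_mono (by simp) this
    linarith
  have hmono : (P0 (A0 ∩ A1)).toReal ≤ (P0 {ω | δ ^ 2 ≤ (U ω - L ω) ^ 2}).toReal :=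
    ENNReal.toReal_mono (fin _ _) (measure_mono hsub)
  linarith
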